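/- arXiv:2211.14686 — 2 statements merged into one kernel-verified Lean document; each statement's English description precedes it below -/
import Mathlib

section
/- Let (Z, μ) be a finite measure space, let B be a positive natural number, and for each b ∈ Fin B let c_b : Z → ℝ be a measurable, nonnegative, μ-integrable function. Define f* : Z → Fin B by f*(ω) = the smallest index b attaining min_{j ∈ Fin B} c_j(ω). Then f* is measurable, the sets A_b* = (f*)⁻¹({b}) form a measurable partition of Z, and ∑_b ∫_{A_b*} c_b dμ = ∫_Z (min_{b} c_b(ω)) dμ(ω); consequently {A_b*} minimizes ∑_b ∫_{A_b} c_b dμ over all measurable partitions {A_b} of Z. -/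
open MeasureTheory

open scoped Classical

/-- The smallest index attaining the minimum of `c : Fin B → ℝ`. -/
noncomputable def leastArgmin {B : ℕ} (hB : 0 < B) (c : Fin B → ℝ) : Fin B :=
  (Finset.univ.filter fun b => ∀ j, c b ≤ c j).min' (by
    obtain ⟨b, -, hb⟩ := Finset.exists_min_image Finset.univ c ⟨⟨0, hB⟩, Finset.mem_univ _⟩
    exact ⟨b, Finset.mem_filter.mpr ⟨Finset.mem_univ _, fun j => hb j (Finset.mem_univ _)⟩⟩)

lemma leastArgmin_mem {B : ℕ} (hB : 0 < B) (c : Fin B → ℝ) :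
    leastArgmin hB c ∈ Finset.univ.filter fun b => ∀ j, c b ≤ c j :=
  Finset.min'_mem _ _

lemma leastArgmin_spec {B : ℕ} (hB : 0 < B) (c : Fin B → ℝ) :
    ∀ j, c (leastArgmin hB c) ≤ c j :=
  (Finset.mem_filter.mp (leastArgmin_mem hB c)).2

lemma leastArgmin_le {B : ℕ} (hB : 0 < B) (c : Fin B → ℝ) (i : Fin B)
    (hi : ∀ j, c i ≤ c j) : leastArgmin hB c ≤ i :=
  Finset.min'_le _ _ (Finset.mem_filter.mpr ⟨Finset.mem_univ _, hi⟩)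

lemma leastArgmin_eq_iff {B : ℕ} (hB : 0 < B) (c : Fin B → ℝ) (b : Fin B) :
    leastArgmin hB c = b ↔ (∀ j, c b ≤ c j) ∧ ∀ i, (∀ j, c i ≤ c j) → b ≤ i := by
  constructor
  · rintro rfl
    exact ⟨leastArgmin_spec hB c, fun i hi => leastArgmin_le hB c i hi⟩
  · rintro ⟨h1, h2⟩
    exact le_antisymm (leastArgmin_le hB c b h1) (h2 _ (leastArgmin_spec hB c))

lemma meas_inf' {Z : Type*} [MeasurableSpace Z] {B : ℕ} (s : Finset (Fin B)) (hs : s.Nonempty)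
    (c : Fin B → Z → ℝ) (hmeas : ∀ b, Measurable (c b)) :
    Measurable (fun ω => s.inf' hs (fun b => c b ω)) := by
  induction hs using Finset.Nonempty.cons_induction with
  | singleton a => simpa using hmeas a
  | cons a s ha hs ih =>
      simp only [Finset.inf'_cons (H := hs)]
      exact (hmeas a).inf ih

/-- **Attainment half of Proposition 1.** The partition `A_b* = (f*)⁻¹ {b}` induced by the
least-index argmin map `f*` is a measurable partition whose total cost equals
`∫_Z min_b c b dμ`, and hence it minimizes the total cost over all measurable partitions. -/
theorem argmin_partition_optimal
    {Z : Type*} [MeasurableSpace Z] (μ : Measure Z) [IsFiniteMeasure μ]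
    (B : ℕ) (hB : 0 < B) (c : Fin B → Z → ℝ)
    (hmeas : ∀ b, Measurable (c b))
    (hnonneg : ∀ b, ∀ ω, 0 ≤ c b ω)
    (hint : ∀ b, Integrable (c b) μ) :
    Measurable (fun ω => leastArgmin hB (fun b => c b ω)) ∧
    (∀ b, MeasurableSet {ω | leastArgmin hB (fun j => c j ω) = b}) ∧
    Pairwise (Function.onFun Disjoint (fun b => {ω | leastArgmin hB (fun j => c j ω) = b})) ∧
    (⋃ b, {ω | leastArgmin hB (fun j => c j ω) = b}) = Set.univ ∧
    (∑ b, ∫ ω in {ω | leastArgmin hB (fun j => c j ω) = b}, c b ω ∂μ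
        = ∫ ω, Finset.univ.inf'
            (⟨⟨0, hB⟩, Finset.mem_univ _⟩ : (Finset.univ : Finset (Fin B)).Nonempty)
            (fun b => c b ω) ∂μ) ∧
    (∀ A : Fin B → Set Z, (∀ b, MeasurableSet (A b)) →
        Pairwise (Function.onFun Disjoint A) → (⋃ b, A b) = Set.univ →
        ∑ b, ∫ ω in {ω | leastArgmin hB (fun j => c j ω) = b}, c b ω ∂μ
          ≤ ∑ b, ∫ ω in A b, c b ω ∂μ) := by
  set ne : (Finset.univ : Finset (Fin B)).Nonempty := ⟨⟨0, hB⟩, Finset.mem_univ _⟩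
  set g : Z → ℝ := fun ω => Finset.univ.inf' ne (fun b => c b ω) with hg
  set S : Fin B → Set Z := fun b => {ω | leastArgmin hB (fun j => c j ω) = b} with hS
  -- basic facts about g
  have hg_le : ∀ ω b, g ω ≤ c b ω := fun ω b => Finset.inf'_le _ (Finset.mem_univ b)
  have hg_nonneg : ∀ ω, 0 ≤ g ω := fun ω =>
    Finset.le_inf' _ _ (fun b _ => hnonneg b ω)
  have hg_meas : Measurable g := meas_inf' _ ne c hmeas
  have hg_int : Integrable g μ := by
    refine (hint ⟨0, hB⟩).mono hg_meas.aestronglyMeasurable (Filter.Eventually.of_forall ?_)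
    intro ω
    rw [Real.norm_eq_abs, Real.norm_eq_abs, abs_of_nonneg (hg_nonneg ω),
      abs_of_nonneg (hnonneg _ ω)]
    exact hg_le ω _
  -- on S b, c b = g
  have hSg : ∀ b, ∀ ω ∈ S b, c b ω = g ω := by
    intro b ω hω
    have h1 : ∀ j, c b ω ≤ c j ω := by
      have := leastArgmin_spec hB (fun j => c j ω)
      rwa [show leastArgmin hB (fun j => c j ω) = b from hω] at this
    exact le_antisymm (Finset.le_inf' _ _ fun j _ => h1 j) (hg_le ω b)
  -- measurability of the fibers
  have hSmeas : ∀ b, MeasurableSet (S b) := by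
    intro b
    have heq : S b = (⋂ j, {ω | c b ω ≤ c j ω}) ∩
        ⋂ i, {ω | (∀ j, c i ω ≤ c j ω) → b ≤ i} := by
      ext ω
      simp only [hS, Set.mem_setOf_eq, Set.mem_inter_iff, Set.mem_iInter,
        leastArgmin_eq_iff]
    rw [heq]
    refine (MeasurableSet.iInter fun j => measurableSet_le (hmeas b) (hmeas j)).inter
      (MeasurableSet.iInter fun i => ?_)
    by_cases h : b ≤ i
    · simp only [h]
      simp
    · have : {ω | (∀ j, c i ω ≤ c j ω) → b ≤ i} = (⋂ j, {ω | c i ω ≤ c j ω})ᶜ := by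
        ext ω; simp [h]
      rw [this]
      exact (MeasurableSet.iInter fun j => measurableSet_le (hmeas i) (hmeas j)).compl
  -- measurability of f*
  have hfmeas : Measurable (fun ω => leastArgmin hB (fun b => c b ω)) :=
    measurable_to_countable' fun b => hSmeas b
  -- disjointness
  have hdisj : Pairwise (Function.onFun Disjoint S) := by
    intro b b' hbb'
    rw [Function.onFun, Set.disjoint_left]
    rintro ω h1 h2
    exact hbb' (h1.symm.trans h2)
  -- cover
  have hcover : (⋃ b, S b) = Set.univ := by
    ext ω
    simp only [Set.mem_iUnion, Set.mem_univ, iff_true]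
    exact ⟨_, rfl⟩
  -- for any measurable partition A, ∑ b ∫_{A b} g = ∫ g
  have key : ∀ A : Fin B → Set Z, (∀ b, MeasurableSet (A b)) →
      Pairwise (Function.onFun Disjoint A) → (⋃ b, A b) = Set.univ →
      ∑ b, ∫ ω in A b, g ω ∂μ = ∫ ω, g ω ∂μ := by
    intro A hA hAd hAc
    have hion : IntegrableOn g (⋃ b, A b) μ := by rw [hAc]; exact hg_int.integrableOn
    have := MeasureTheory.integral_iUnion hA hAd hion
    rw [hAc] at this
    rw [← tsum_fintype (L := .unconditional _), ← this, setIntegral_univ]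
  -- the cost identity
  have hcost : ∑ b, ∫ ω in S b, c b ω ∂μ = ∫ ω, g ω ∂μ := by
    rw [← key S hSmeas hdisj hcover]
    exact Finset.sum_congr rfl fun b _ =>
      setIntegral_congr_fun (hSmeas b) (fun ω hω => hSg b ω hω)
  refine ⟨hfmeas, hSmeas, hdisj, hcover, hcost, ?_⟩
  intro A hA hAd hAc
  rw [hcost, ← key A hA hAd hAc]
  refine Finset.sum_le_sum fun b _ => ?_
  exact setIntegral_mono_on hg_int.integrableOn (hint b).integrableOn (hA b)
    (fun ω _ => hg_le ω b)
end

section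
/- Let (Z, μ) be a finite measure space, let B be a positive natural number, and for each b ∈ Fin B let F_b : Z → ℝ be a measurable, nonnegative, μ-integrable function. Define V(α) = ∫_Z min_{b ∈ Fin B} (α_b · F_b(ω)) dμ(ω). Then for all α, α' with nonnegative entries, |V(α) − V(α')| ≤ (max_{b ∈ Fin B} |α_b − α'_b|) · ∑_{b ∈ Fin B} ∫_Z F_b dμ; in particular V is Lipschitz continuous (hence continuous) on the nonnegative orthant of Fin B → ℝ. -/
open MeasureTheory

/-- The optimal value of the region partitioning problem at weight vector `α`:
`V(α) = ∫_Z min_b (α_b · F_b ω) dμ(ω)`. -/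
noncomputable def partitionValue {Z : Type*} [MeasurableSpace Z] (μ : Measure Z)
    {B : ℕ} (hB : 0 < B) (F : Fin B → Z → ℝ) (α : Fin B → ℝ) : ℝ :=
  ∫ ω, Finset.univ.inf'
      (⟨⟨0, hB⟩, Finset.mem_univ _⟩ : (Finset.univ : Finset (Fin B)).Nonempty)
      (fun b => α b * F b ω) ∂μ

-- integrability of finite inf'
lemma integrable_inf' {Z : Type*} [MeasurableSpace Z] {μ : Measure Z} {ι : Type*}
    (s : Finset ι) (hs : s.Nonempty) (g : ι → Z → ℝ)
    (hg : ∀ i ∈ s, Integrable (g i) μ) :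
    Integrable (fun ω => s.inf' hs (fun i => g i ω)) μ := by
  induction hs using Finset.Nonempty.cons_induction with
  | singleton a =>
    simpa only [Finset.inf'_singleton] using hg a (Finset.mem_singleton_self a)
  | cons a t ha ht ih =>
    simp only [Finset.inf'_cons ht]
    exact (hg a (Finset.mem_cons_self a t)).inf
      (ih (fun i hi => hg i (Finset.mem_cons_of_mem hi)))

lemma abs_inf'_sub_inf'_le {ι : Type*} (s : Finset ι) (hs : s.Nonempty) (f g : ι → ℝ) :
    |s.inf' hs f - s.inf' hs g| ≤ s.sup' hs (fun i => |f i - g i|) := by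
  rw [abs_sub_le_iff]
  constructor
  · obtain ⟨b, hb, hbe⟩ := s.exists_mem_eq_inf' hs g
    calc s.inf' hs f - s.inf' hs g ≤ f b - g b := by
          rw [hbe]; exact sub_le_sub_right (Finset.inf'_le _ hb) _
      _ ≤ |f b - g b| := le_abs_self _
      _ ≤ _ := Finset.le_sup' (fun i => |f i - g i|) hb
  · obtain ⟨b, hb, hbe⟩ := s.exists_mem_eq_inf' hs f
    calc s.inf' hs g - s.inf' hs f ≤ g b - f b := by
          rw [hbe]; exact sub_le_sub_right (Finset.inf'_le _ hb) _
      _ ≤ |f b - g b| := by rw [abs_sub_comm]; exact le_abs_self _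
      _ ≤ _ := Finset.le_sup' (fun i => |f i - g i|) hb

/-- **Lipschitz continuity of the value function.** For weight vectors `α, α'` with
nonnegative entries, `|V(α) − V(α')| ≤ (max_b |α_b − α'_b|) · ∑_b ∫_Z F_b dμ`. -/
theorem partitionValue_lipschitz
    {Z : Type*} [MeasurableSpace Z] (μ : Measure Z) [IsFiniteMeasure μ]
    (B : ℕ) (hB : 0 < B) (F : Fin B → Z → ℝ)
    (hmeas : ∀ b, Measurable (F b))
    (hnonneg : ∀ b, ∀ ω, 0 ≤ F b ω)
    (hint : ∀ b, Integrable (F b) μ) :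
    ∀ α α' : Fin B → ℝ, (∀ b, 0 ≤ α b) → (∀ b, 0 ≤ α' b) →
      |partitionValue μ hB F α - partitionValue μ hB F α'|
        ≤ (Finset.univ.sup'
              (⟨⟨0, hB⟩, Finset.mem_univ _⟩ : (Finset.univ : Finset (Fin B)).Nonempty)
              (fun b => |α b - α' b|))
          * ∑ b, ∫ ω, F b ω ∂μ := by
  intro α α' hα hα'
  set ne : (Finset.univ : Finset (Fin B)).Nonempty :=
    ⟨⟨0, hB⟩, Finset.mem_univ _⟩ with hne
  set M : ℝ := Finset.univ.sup' ne (fun b => |α b - α' b|) with hM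
  have hM0 : 0 ≤ M := le_trans (abs_nonneg (α ⟨0,hB⟩ - α' ⟨0,hB⟩)) (Finset.le_sup' (fun b => |α b - α' b|) (Finset.mem_univ (⟨0, hB⟩ : Fin B)))
  have hintf : Integrable (fun ω => Finset.univ.inf' ne (fun b => α b * F b ω)) μ :=
    integrable_inf' _ ne _ (fun b _ => (hint b).const_mul _)
  have hintg : Integrable (fun ω => Finset.univ.inf' ne (fun b => α' b * F b ω)) μ :=
    integrable_inf' _ ne _ (fun b _ => (hint b).const_mul _)
  have hintS : Integrable (fun ω => M * ∑ b, F b ω) μ :=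
    (integrable_finset_sum _ (fun b _ => hint b)).const_mul M
  have key : ∀ ω, |Finset.univ.inf' ne (fun b => α b * F b ω)
      - Finset.univ.inf' ne (fun b => α' b * F b ω)| ≤ M * ∑ b, F b ω := by
    intro ω
    refine le_trans (abs_inf'_sub_inf'_le _ ne _ _) ?_
    apply Finset.sup'_le
    intro b _
    have : |α b * F b ω - α' b * F b ω| = |α b - α' b| * F b ω := by
      rw [← sub_mul, abs_mul, abs_of_nonneg (hnonneg b ω)]
    rw [this]
    have h1 : |α b - α' b| ≤ M := Finset.le_sup' (fun b => |α b - α' b|) (Finset.mem_univ b)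
    have h2 : F b ω ≤ ∑ b, F b ω :=
      Finset.single_le_sum (fun i _ => hnonneg i ω) (Finset.mem_univ b)
    exact mul_le_mul h1 h2 (hnonneg b ω) hM0
  unfold partitionValue
  rw [← integral_sub hintf hintg]
  calc |∫ ω, (Finset.univ.inf' ne (fun b => α b * F b ω)
          - Finset.univ.inf' ne (fun b => α' b * F b ω)) ∂μ|
      ≤ ∫ ω, |Finset.univ.inf' ne (fun b => α b * F b ω)
          - Finset.univ.inf' ne (fun b => α' b * F b ω)| ∂μ :=
        by
        simpa only [Real.norm_eq_abs] using
          norm_integral_le_integral_norm (μ := μ)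
            (fun ω => Finset.univ.inf' ne (fun b => α b * F b ω)
              - Finset.univ.inf' ne (fun b => α' b * F b ω))
    _ ≤ ∫ ω, M * ∑ b, F b ω ∂μ := by
        refine integral_mono (hintf.sub hintg).abs hintS key
    _ = M * ∑ b, ∫ ω, F b ω ∂μ := by
        rw [integral_const_mul, integral_finset_sum _ (fun b _ => hint b)]
end
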